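/- Let X be an infinite-dimensional complex Banach space and r ∈ ℝ with G_a(X) < r < 1, where G_a(X) is the gap for absolute convergence of Dirichlet series in X. Then for every t > 1/(1−r), every sequence (x_n)_{n≥1} in X with Σ_n |x'(x_n)| < ∞ for every continuous linear functional x' ∈ X' satisfies Σ_n ‖x_n‖^t < ∞ (i.e. the identity of X is (t,1)-summing). -/

import Mathlib

open Filter Finset Topology

/-- The abscissa of convergence `σ_c(D)` of the Dirichlet series `D = ∑ₙ aₙ n^{-s}`,
as an extended real number. -/
noncomputable def dirichletSigmaC {X : Type*} [NormedAddCommGroup X] [NormedSpace ℂ X]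
    (a : ℕ → X) : EReal :=
  sInf { x : EReal | ∃ r : ℝ, x = (r : EReal) ∧ ∀ s : ℂ, r < s.re →
    ∃ L : X, Tendsto
      (fun N : ℕ => ∑ n ∈ Finset.range N, (((n + 1 : ℕ) : ℂ) ^ (-s)) • a (n + 1))
      atTop (𝓝 L) }

/-- The abscissa of absolute convergence `σ_a(D)` of `D = ∑ₙ aₙ n^{-s}`. -/
noncomputable def dirichletSigmaA {X : Type*} [SeminormedAddCommGroup X]
    (a : ℕ → X) : EReal :=
  sInf { x : EReal | ∃ r : ℝ, x = (r : EReal) ∧ ∀ σ : ℝ, r < σ →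
    Summable (fun n : ℕ => ‖a (n + 1)‖ * ((n + 1 : ℕ) : ℝ) ^ (-σ)) }

/-- The abscissa of weak absolute convergence `σ_a^w(D) = sup_{x'} σ_a(x'(D))`. -/
noncomputable def dirichletSigmaAw {X : Type*} [NormedAddCommGroup X] [NormedSpace ℂ X]
    (a : ℕ → X) : EReal :=
  ⨆ x' : X →L[ℂ] ℂ, dirichletSigmaA (fun n => x' (a n))

/-- The gap for absolute convergence of Dirichlet series in `X`:
`G_a(X) = sup_D (σ_a(D) - σ_a^w(D))`, the supremum over all Dirichlet series with
coefficients in `X` and finite abscissa of convergence. -/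
noncomputable def dirichletGapA (X : Type*) [NormedAddCommGroup X] [NormedSpace ℂ X] :
    EReal :=
  sSup { g : EReal | ∃ a : ℕ → X, dirichletSigmaC a < ⊤ ∧
    g = dirichletSigmaA a - dirichletSigmaAw a }

lemma exists_norm_bound {X : Type*} [NormedAddCommGroup X] [NormedSpace ℂ X]
    (x : ℕ → X) (hx : ∀ x' : X →L[ℂ] ℂ, Summable (fun n => ‖x' (x n)‖)) :
    ∃ M : ℝ, 0 ≤ M ∧ ∀ n, ‖x n‖ ≤ M := by
  obtain ⟨C, hC⟩ := banach_steinhaus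
    (g := fun n => NormedSpace.inclusionInDoubleDual ℂ X (x n)) (by
      intro x'
      refine ⟨∑' m, ‖x' (x m)‖, fun n => ?_⟩
      have h1 : ‖(NormedSpace.inclusionInDoubleDual ℂ X (x n)) x'‖ = ‖x' (x n)‖ := by
        rw [NormedSpace.dual_def]
      rw [h1]
      exact Summable.le_tsum (hx x') n (fun j _ => norm_nonneg _))
  refine ⟨C, le_trans (norm_nonneg _) (hC 0), fun n => ?_⟩
  have h2 : ‖NormedSpace.inclusionInDoubleDual ℂ X (x n)‖ = ‖x n‖ :=
    (NormedSpace.inclusionInDoubleDualLi ℂ (E := X)).norm_map (x n)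
  exact h2 ▸ hC n

lemma key_summable {X : Type*} [NormedAddCommGroup X] [NormedSpace ℂ X] [CompleteSpace X]
    (x : ℕ → X) (hx : ∀ x' : X →L[ℂ] ℂ, Summable (fun n => ‖x' (x n)‖))
    (M : ℝ) (hM0 : 0 ≤ M) (hM : ∀ n, ‖x n‖ ≤ M)
    (r : ℝ) (h1 : dirichletGapA X < ((r : ℝ) : EReal))
    (f : ℕ → ℕ) (hf : Function.Injective f)
    (σ : ℝ) (hσ : r < σ) :
    Summable (fun n : ℕ => ‖x (f (n + 1))‖ * ((n + 1 : ℕ) : ℝ) ^ (-σ)) := by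
  classical
  set a : ℕ → X := fun n => x (f n) with ha
  -- σ_c(a) ≤ 1
  have hσc : dirichletSigmaC a < ⊤ := by
    have hmem : ((1:ℝ) : EReal) ∈ { y : EReal | ∃ r' : ℝ, y = (r' : EReal) ∧ ∀ s : ℂ,
        r' < s.re → ∃ L : X, Tendsto
        (fun N : ℕ => ∑ n ∈ Finset.range N, (((n + 1 : ℕ) : ℂ) ^ (-s)) • a (n + 1))
        atTop (𝓝 L) } := by
      refine ⟨1, rfl, fun s hs => ?_⟩
      have hsum : Summable (fun n : ℕ => (((n + 1 : ℕ) : ℂ) ^ (-s)) • a (n + 1)) := by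
        apply Summable.of_norm
        have hnorm : ∀ n : ℕ, ‖(((n + 1 : ℕ) : ℂ) ^ (-s)) • a (n + 1)‖
            ≤ M * (((n + 1 : ℕ) : ℝ) ^ (-s.re)) := by
          intro n
          rw [norm_smul]
          have hb : ((n + 1 : ℕ) : ℂ) = ((((n + 1 : ℕ) : ℝ)) : ℂ) := by push_cast; ring
          have hcn : ‖((n + 1 : ℕ) : ℂ) ^ (-s)‖ = ((n + 1 : ℕ) : ℝ) ^ (-s.re) := by
            rw [hb,
              Complex.norm_cpow_eq_rpow_re_of_pos (by positivity), Complex.neg_re]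
          rw [hcn, mul_comm]
          exact mul_le_mul_of_nonneg_right (hM _) (by positivity)
        refine Summable.of_nonneg_of_le (fun n => norm_nonneg _) hnorm ?_
        have hbase : Summable (fun n : ℕ => ((n : ℕ) : ℝ) ^ (-s.re)) :=
          Real.summable_nat_rpow.mpr (by linarith)
        exact (((summable_nat_add_iff 1).mpr hbase).mul_left M)
      exact ⟨∑' n, (((n + 1 : ℕ) : ℂ) ^ (-s)) • a (n + 1), hsum.hasSum.tendsto_sum_nat⟩
    exact lt_of_le_of_lt (sInf_le hmem) (EReal.coe_lt_top 1)
  -- σ_a^w(a) ≤ 0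
  have hσaw : dirichletSigmaAw a ≤ (0 : EReal) := by
    apply iSup_le
    intro x'
    have hmem : ((0:ℝ) : EReal) ∈ { y : EReal | ∃ r' : ℝ, y = (r' : EReal) ∧ ∀ σ' : ℝ,
        r' < σ' → Summable (fun n : ℕ => ‖x' (a (n + 1))‖ * ((n + 1 : ℕ) : ℝ) ^ (-σ')) } := by
      refine ⟨0, rfl, fun σ' hσ' => ?_⟩
      have hinj : Function.Injective (fun n : ℕ => f (n + 1)) :=
        hf.comp (fun p q h => by omega)
      have hsum0 : Summable (fun n : ℕ => ‖x' (x (f (n + 1)))‖) :=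
        (hx x').comp_injective hinj
      refine Summable.of_nonneg_of_le (fun n => by positivity) (fun n => ?_) hsum0
      have hle1 : ((n + 1 : ℕ) : ℝ) ^ (-σ') ≤ 1 :=
        Real.rpow_le_one_of_one_le_of_nonpos (by exact_mod_cast Nat.le_add_left 1 n)
          (by linarith)
      calc ‖x' (a (n + 1))‖ * ((n + 1 : ℕ) : ℝ) ^ (-σ')
          ≤ ‖x' (a (n + 1))‖ * 1 := by
            exact mul_le_mul_of_nonneg_left hle1 (norm_nonneg _)
        _ = ‖x' (x (f (n + 1)))‖ := by rw [mul_one]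
    exact le_trans (sInf_le hmem) (le_of_eq (by norm_num))
  -- use the gap hypothesis
  have hgap : dirichletSigmaA a - dirichletSigmaAw a ≤ dirichletGapA X :=
    le_sSup ⟨a, hσc, rfl⟩
  have hlt : dirichletSigmaA a < ((r : ℝ) : EReal) := by
    refine lt_of_le_of_lt ?_ (lt_of_le_of_lt hgap h1)
    have h2 : (0 : EReal) ≤ -dirichletSigmaAw a := by
      simpa using EReal.neg_le_neg_iff.2 hσaw
    calc dirichletSigmaA a = dirichletSigmaA a + 0 := (add_zero _).symm
      _ ≤ dirichletSigmaA a + (-dirichletSigmaAw a) := add_le_add le_rfl h2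
      _ = dirichletSigmaA a - dirichletSigmaAw a := (sub_eq_add_neg _ _).symm
  have hlt2 : dirichletSigmaA a < ((σ : ℝ) : EReal) :=
    lt_of_lt_of_le hlt (by exact_mod_cast le_of_lt hσ)
  obtain ⟨b, hbmem, hblt⟩ := sInf_lt_iff.mp hlt2
  obtain ⟨r', rfl, hr'⟩ := hbmem
  have : r' < σ := by exact_mod_cast hblt
  exact hr' σ this



lemma exists_inj_aux (K : ℕ → Finset ℕ) (hmono : Monotone K)
    (hk : ∀ n : ℕ, ∃ m, n < (K m).card) :
    ∃ f : ℕ → ℕ, Function.Injective f ∧ ∀ m n, n < (K m).card → f n ∈ K m := by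
  classical
  -- index of first finset big enough
  let mm : ℕ → ℕ := fun n => Nat.find (hk n)
  have hmm : ∀ n, n < (K (mm n)).card := fun n => Nat.find_spec (hk n)
  have hmm_min : ∀ n m, n < (K m).card → mm n ≤ m := fun n m h => Nat.find_min' (hk n) h
  -- pick function
  have hpick : ∀ i : ℕ, ∀ s : Finset ℕ, s.card ≤ i → ∃ y, y ∈ K (mm i) ∧ y ∉ s := by
    intro i s hs
    have h : s.card < (K (mm i)).card := lt_of_le_of_lt hs (hmm i)
    by_contra hc; push_neg at hc
    exact absurd (Finset.card_le_card (fun y hy => by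
      by_contra hys; exact hys (hc y hy))) (not_le.2 h)
  choose! pick hpick1 hpick2 using hpick
  -- build the list of chosen values
  let L : ℕ → List ℕ := fun n => Nat.rec [] (fun i ih => ih ++ [pick i ih.toFinset]) n
  have hL_succ : ∀ n, L (n + 1) = L n ++ [pick n (L n).toFinset] := fun n => rfl
  have hlen : ∀ n, (L n).length = n := by
    intro n; induction n with
    | zero => rfl
    | succ n ih => rw [hL_succ, List.length_append, ih]; rfl
  have hcard : ∀ n, (L n).toFinset.card ≤ n := fun n => le_trans (L n).toFinset_card_le (le_of_eq (hlen n))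
  set f : ℕ → ℕ := fun i => pick i (L i).toFinset with hf
  have hfK : ∀ i, f i ∈ K (mm i) := fun i => hpick1 i (L i).toFinset (hcard i)
  have hfnot : ∀ i, f i ∉ (L i).toFinset := fun i => hpick2 i (L i).toFinset (hcard i)
  have hmemL : ∀ i n, i < n → f i ∈ (L n).toFinset := by
    intro i n hin
    induction n with
    | zero => omega
    | succ n ih =>
      rw [hL_succ]
      rcases Nat.lt_succ_iff_lt_or_eq.mp hin with h | h
      · simp only [List.toFinset_append, Finset.mem_union]; exact Or.inl (ih h)
      · subst h
        simp [f]
  refine ⟨f, ?_, ?_⟩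
  · intro i j hij
    rcases lt_trichotomy i j with h | h | h
    · exact absurd (hij ▸ hmemL i j h) (hfnot j)
    · exact h
    · exact absurd (hij ▸ hmemL j i h) (hfnot i)
  · intro m n hn
    exact hmono (hmm_min n m hn) (hfK n)


lemma sum_rpow_lb (σ : ℝ) (hσ : σ < 1) (k : ℕ) :
    (2:ℝ)^(σ-1) * (k:ℝ)^(1-σ) ≤ ∑ n ∈ Finset.range k, ((n+1:ℕ):ℝ)^(-σ) := by
  rcases Nat.eq_zero_or_pos k with hk | hk
  · subst hk
    simp [Real.zero_rpow (by linarith : (1:ℝ) - σ ≠ 0)]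
  have hk0 : (0:ℝ) < (k:ℝ) := by exact_mod_cast hk
  rcases le_or_gt 0 σ with h0 | h0
  · -- each term ≥ k^{-σ}
    have hterm : ∀ n ∈ Finset.range k, (k:ℝ)^(-σ) ≤ ((n+1:ℕ):ℝ)^(-σ) := by
      intro n hn
      have hn' : (n:ℕ) + 1 ≤ k := Finset.mem_range.mp hn
      have : ((n+1:ℕ):ℝ) ≤ (k:ℝ) := by exact_mod_cast hn'
      exact Real.rpow_le_rpow_of_nonpos (by positivity) this (by linarith)
    calc (2:ℝ)^(σ-1) * (k:ℝ)^(1-σ) ≤ 1 * (k:ℝ)^(1-σ) := by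
          apply mul_le_mul_of_nonneg_right _ (by positivity)
          exact Real.rpow_le_one_of_one_le_of_nonpos (by norm_num) (by linarith)
      _ = (k:ℝ) * (k:ℝ)^(-σ) := by
          rw [one_mul, show (1:ℝ) - σ = 1 + (-σ) by ring, Real.rpow_add hk0,
            Real.rpow_one]
      _ = ∑ _n ∈ Finset.range k, (k:ℝ)^(-σ) := by
          rw [Finset.sum_const, Finset.card_range, nsmul_eq_mul]
      _ ≤ _ := Finset.sum_le_sum hterm
  · -- σ < 0 : use the top half
    have hsub : Finset.Ico (k/2) k ⊆ Finset.range k := by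
      intro n hn; rw [Finset.mem_range]; exact (Finset.mem_Ico.mp hn).2
    have hterm : ∀ n ∈ Finset.Ico (k/2) k, ((k:ℝ)/2)^(-σ) ≤ ((n+1:ℕ):ℝ)^(-σ) := by
      intro n hn
      have h1 : k/2 ≤ n := (Finset.mem_Ico.mp hn).1
      have h2 : (k:ℝ)/2 ≤ ((n+1:ℕ):ℝ) := by
        have : (k:ℝ)/2 ≤ ((k/2 : ℕ):ℝ) + 1 := by
          have h3 : k ≤ 2*(k/2) + 2 := by omega
          have := (Nat.cast_le (α := ℝ)).mpr h3
          push_cast at this ⊢; linarith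
        have h4 : ((k/2:ℕ):ℝ) + 1 ≤ ((n+1:ℕ):ℝ) := by exact_mod_cast Nat.succ_le_succ h1
        linarith
      exact Real.rpow_le_rpow (by positivity) h2 (by linarith)
    have hcount : (k:ℝ)/2 ≤ ((k - k/2 : ℕ):ℝ) := by
      have h3 : k ≤ 2*(k - k/2) := by omega
      have := (Nat.cast_le (α := ℝ)).mpr h3
      push_cast at this ⊢; linarith
    calc (2:ℝ)^(σ-1) * (k:ℝ)^(1-σ) = ((k:ℝ)/2)^(1-σ) := by
          rw [Real.div_rpow (le_of_lt hk0) (by norm_num),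
            show σ - 1 = -(1-σ) by ring, Real.rpow_neg (by norm_num), inv_mul_eq_div]
      _ = ((k:ℝ)/2) * ((k:ℝ)/2)^(-σ) := by
          rw [show (1:ℝ) - σ = 1 + (-σ) by ring, Real.rpow_add (by positivity),
            Real.rpow_one]
      _ ≤ ((k - k/2:ℕ):ℝ) * ((k:ℝ)/2)^(-σ) := by
          apply mul_le_mul_of_nonneg_right hcount (by positivity)
      _ = ∑ _n ∈ Finset.Ico (k/2) k, ((k:ℝ)/2)^(-σ) := by
          rw [Finset.sum_const, Nat.card_Ico, nsmul_eq_mul]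
      _ ≤ ∑ n ∈ Finset.Ico (k/2) k, ((n+1:ℕ):ℝ)^(-σ) := Finset.sum_le_sum hterm
      _ ≤ _ := Finset.sum_le_sum_of_subset_of_nonneg hsub (by intros; positivity)


lemma summable_rpow_of_count_bound
    (a : ℕ → ℝ) (ha : ∀ n, 0 ≤ a n) (M : ℝ) (hM : 0 < M) (hMa : ∀ n, a n < M)
    (t q C : ℝ) (hq : 0 < q) (hqt : q < t) (hC : 0 < C)
    (Kf : ℝ → Finset ℕ) (hK : ∀ ε, 0 < ε → ∀ n, ε < a n → n ∈ Kf ε)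
    (hcount : ∀ ε, 0 < ε → ((Kf ε).card : ℝ) ≤ (C / ε) ^ q) :
    Summable (fun n => a n ^ t) := by
  classical
  have ht : 0 < t := lt_trans hq hqt
  -- dyadic level of n
  have hex : ∀ n, 0 < a n → ∃ j : ℕ, M / 2 ^ (j + 1) < a n := by
    intro n hn
    obtain ⟨j, hj⟩ := pow_unbounded_of_one_lt (M / a n) (one_lt_two (α := ℝ))
    refine ⟨j, ?_⟩
    have h1 : M / 2 ^ j < a n := by
      rw [div_lt_iff₀ (by positivity)]
      rw [div_lt_iff₀ hn] at hj
      linarith [hj]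
    calc M / 2 ^ (j + 1) ≤ M / 2 ^ j := by
          apply div_le_div_of_nonneg_left hM.le (by positivity)
          exact pow_le_pow_right₀ (by norm_num) (Nat.le_succ j)
      _ < a n := h1
  set jn : ℕ → ℕ := fun n => if h : 0 < a n then Nat.find (hex n h) else 0 with hjn
  have hj1 : ∀ n, 0 < a n → M / 2 ^ (jn n + 1) < a n := by
    intro n hn
    simp only [hjn, dif_pos hn]
    exact Nat.find_spec (hex n hn)
  have hj2 : ∀ n, 0 < a n → a n ≤ M / 2 ^ (jn n) := by
    intro n hn
    simp only [hjn, dif_pos hn]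
    rcases Nat.eq_zero_or_pos (Nat.find (hex n hn)) with h0 | h0
    · rw [h0, pow_zero, div_one]; exact (hMa n).le
    · obtain ⟨i, hi⟩ := Nat.exists_eq_succ_of_ne_zero (Nat.pos_iff_ne_zero.mp h0)
      have := Nat.find_min (hex n hn) (m := i) (by omega)
      rw [hi]
      push_neg at this
      exact this
  -- the dominating geometric series
  set g : ℕ → ℝ := fun j => (M / 2 ^ j) ^ t with hg
  set h : ℕ → ℝ := fun j => (C * 2 ^ (j + 1) / M) ^ q * g j with hh
  have hρ1 : (2:ℝ) ^ (q - t) < 1 := Real.rpow_lt_one_of_one_lt_of_neg one_lt_two (by linarith)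
  have hid : ∀ j : ℕ, h j = ((2 * C / M) ^ q * M ^ t) * ((2:ℝ) ^ (q - t)) ^ j := by
    intro j
    have h2j : (0:ℝ) < 2 ^ j := by positivity
    have e1 : C * 2 ^ (j + 1) / M = (2 * C / M) * 2 ^ j := by field_simp; ring
    have e2 : ((2:ℝ) ^ (q - t)) ^ j = (2:ℝ) ^ ((q - t) * (j:ℝ)) := by
      rw [← Real.rpow_natCast ((2:ℝ) ^ (q - t)) j, ← Real.rpow_mul (by norm_num)]
    simp only [hh, hg]
    rw [e1, e2, Real.mul_rpow (by positivity) h2j.le,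
      Real.div_rpow hM.le h2j.le,
      ← Real.rpow_natCast (2:ℝ) j, ← Real.rpow_mul (by norm_num),
      ← Real.rpow_mul (by norm_num),
      show (q - t) * (j:ℝ) = (j:ℝ) * q - (j:ℝ) * t by ring,
      Real.rpow_sub (by norm_num : (0:ℝ) < 2)]
    ring
  have hsummable : Summable h := by
    refine Summable.congr ?_ (fun j => (hid j).symm)
    exact (summable_geometric_of_lt_one (by positivity) hρ1).mul_left _
  have hB : ∀ u : Finset ℕ, ∑ n ∈ u, a n ^ t ≤ ∑' j, h j := by
    intro u
    set u1 : Finset ℕ := u.filter (fun n => 0 < a n) with hu1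
    have step0 : ∑ n ∈ u, a n ^ t = ∑ n ∈ u1, a n ^ t := by
      rw [← Finset.sum_filter_add_sum_filter_not u (fun n => 0 < a n) (fun n => a n ^ t)]
      have hz : ∑ n ∈ u.filter (fun n => ¬ 0 < a n), a n ^ t = 0 := by
        apply Finset.sum_eq_zero
        intro n hn
        have h0 : a n = 0 := le_antisymm (not_lt.mp (Finset.mem_filter.mp hn).2) (ha n)
        rw [h0, Real.zero_rpow (ne_of_gt ht)]
      rw [hz, add_zero]
    have step1 : ∑ n ∈ u1, a n ^ t ≤ ∑ n ∈ u1, g (jn n) := by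
      apply Finset.sum_le_sum
      intro n hn
      have hpos : 0 < a n := (Finset.mem_filter.mp hn).2
      exact Real.rpow_le_rpow (ha n) (hj2 n hpos) ht.le
    have step2 : ∑ n ∈ u1, g (jn n)
        = ∑ j ∈ u1.image jn, ((u1.filter (fun n => jn n = j)).card) • g j :=
      Finset.sum_comp g jn
    have step3 : ∀ j ∈ u1.image jn,
        ((u1.filter (fun n => jn n = j)).card) • g j ≤ h j := by
      intro j _
      have hεpos : (0:ℝ) < M / 2 ^ (j + 1) := by positivity
      have hsub : u1.filter (fun n => jn n = j) ⊆ Kf (M / 2 ^ (j + 1)) := by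
        intro n hn
        obtain ⟨hn1, hn2⟩ := Finset.mem_filter.mp hn
        have hpos : 0 < a n := (Finset.mem_filter.mp hn1).2
        exact hK _ hεpos n (hn2 ▸ hj1 n hpos)
      have hcard : (((u1.filter (fun n => jn n = j)).card : ℝ))
          ≤ (C * 2 ^ (j + 1) / M) ^ q := by
        refine le_trans ?_ (le_trans (hcount _ hεpos) (le_of_eq ?_))
        · exact_mod_cast Finset.card_le_card hsub
        · congr 1
          field_simp
      rw [nsmul_eq_mul]
      have hgj : 0 ≤ g j := Real.rpow_nonneg (by positivity) t
      exact mul_le_mul_of_nonneg_right hcard hgj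
    have hnn : ∀ j, 0 ≤ h j := by
      intro j
      simp only [hh, hg]
      positivity
    calc ∑ n ∈ u, a n ^ t = ∑ n ∈ u1, a n ^ t := step0
      _ ≤ ∑ n ∈ u1, g (jn n) := step1
      _ = ∑ j ∈ u1.image jn, ((u1.filter (fun n => jn n = j)).card) • g j := step2
      _ ≤ ∑ j ∈ u1.image jn, h j := Finset.sum_le_sum step3
      _ ≤ ∑' j, h j := Summable.sum_le_tsum _ (fun j _ => hnn j) hsummable
  exact summable_of_sum_le (fun n => Real.rpow_nonneg (ha n) t) hB

/-- If `G_a(X) < r < 1` for an infinite-dimensional complex Banach space `X`, then the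
identity of `X` is `(t,1)`-summing for every `t > 1/(1-r)`. -/
theorem p_one_summing_of_gapA_lt
    (X : Type*) [NormedAddCommGroup X] [NormedSpace ℂ X] [CompleteSpace X]
    (hX : ¬ FiniteDimensional ℂ X) (r : ℝ)
    (h1 : dirichletGapA X < ((r : ℝ) : EReal)) (h2 : r < 1)
    (t : ℝ) (ht : 1 / (1 - r) < t)
    (x : ℕ → X) (hx : ∀ x' : X →L[ℂ] ℂ, Summable (fun n => ‖x' (x n)‖)) :
    Summable (fun n => ‖x n‖ ^ t) := by
  classical
  obtain ⟨M, hM0, hM⟩ := exists_norm_bound x hx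
  have hr1 : (0:ℝ) < 1 - r := by linarith
  have htpos : 0 < t := lt_trans (by positivity) ht
  set σ : ℝ := (r + (1 - 1 / t)) / 2 with hσdef
  have hrt : r < 1 - 1 / t := by
    have h' : 1 < t * (1 - r) := by rwa [div_lt_iff₀ hr1] at ht
    have h'' : 1 / t < 1 - r := by rw [div_lt_iff₀ htpos]; linarith
    linarith
  have hσr : r < σ := by rw [hσdef]; linarith
  have hσ2 : σ < 1 - 1 / t := by rw [hσdef]; linarith
  have hσlt1 : σ < 1 := by
    have : 0 < 1 / t := by positivity
    linarith
  have h1σ : (0:ℝ) < 1 - σ := by linarith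
  set q : ℝ := 1 / (1 - σ) with hqdef
  have hqpos : 0 < q := by positivity
  have hqt : q < t := by
    rw [hqdef, div_lt_iff₀ h1σ]
    have h1t : 1 / t < 1 - σ := by linarith
    rw [div_lt_iff₀ htpos] at h1t
    linarith
  set a : ℕ → ℝ := fun n => ‖x n‖ with hadef
  have ha : ∀ n, 0 ≤ a n := fun n => norm_nonneg _
  -- finiteness of superlevel sets
  have hfin : ∀ ε : ℝ, 0 < ε → {n : ℕ | ε < a n}.Finite := by
    intro ε hε
    by_contra hinf
    have hinf : {n : ℕ | ε < a n}.Infinite := hinf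
    have hnth := Nat.nth_injective hinf
    have hsum := key_summable x hx M hM0 hM r h1 _ hnth σ hσr
    have hsum2 : Summable (fun n : ℕ => ε * ((n + 1 : ℕ) : ℝ) ^ (-σ)) := by
      refine Summable.of_nonneg_of_le (fun n => by positivity) (fun n => ?_) hsum
      have hmem := Nat.nth_mem_of_infinite hinf (n + 1)
      exact mul_le_mul_of_nonneg_right (le_of_lt hmem) (by positivity)
    have hsum3 : Summable (fun n : ℕ => ((n + 1 : ℕ) : ℝ) ^ (-σ)) := by
      have := hsum2.mul_left ε⁻¹
      refine this.congr (fun n => ?_)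
      rw [← mul_assoc, inv_mul_cancel₀ (ne_of_gt hε), one_mul]
    have hsum4 : Summable (fun n : ℕ => ((n : ℕ) : ℝ) ^ (-σ)) :=
      (summable_nat_add_iff 1).mp hsum3
    have := Real.summable_nat_rpow.mp hsum4
    linarith
  set Kf : ℝ → Finset ℕ := fun ε => if h : 0 < ε then (hfin ε h).toFinset else ∅ with hKfdef
  have hKmem : ∀ ε, 0 < ε → ∀ n : ℕ, n ∈ Kf ε ↔ ε < a n := by
    intro ε hε n
    simp only [hKfdef, dif_pos hε, Set.Finite.mem_toFinset, Set.mem_setOf_eq]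
  set Nf : ℝ → ℕ := fun ε => (Kf ε).card with hNfdef
  have hKsub : ∀ ε ε' : ℝ, 0 < ε → ε ≤ ε' → Kf ε' ⊆ Kf ε := by
    intro ε ε' hε hεε' n hn
    have hε' : 0 < ε' := lt_of_lt_of_le hε hεε'
    rw [hKmem ε hε]
    exact lt_of_le_of_lt hεε' ((hKmem ε' hε' n).mp hn)
  by_contra hns
  -- Step A: the weak-type quantity is unbounded
  have Hgrow : ∀ C : ℝ, ∃ ε : ℝ, 0 < ε ∧ C < ε * ((Nf ε : ℝ)) ^ (1 - σ) := by
    by_contra hcon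
    push_neg at hcon
    obtain ⟨C, hC⟩ := hcon
    set C' : ℝ := max C 1 with hC'def
    have hC'pos : (0:ℝ) < C' := lt_of_lt_of_le one_pos (le_max_right _ _)
    have hexp1 : (1 - σ) * q = 1 := by
      rw [hqdef, mul_one_div, div_self (ne_of_gt h1σ)]
    have hcount : ∀ ε, 0 < ε → ((Kf ε).card : ℝ) ≤ (C' / ε) ^ q := by
      intro ε hε
      have hb : ε * ((Nf ε : ℝ)) ^ (1 - σ) ≤ C' := le_trans (hC ε hε) (le_max_left _ _)
      have hb2 : ((Nf ε : ℝ)) ^ (1 - σ) ≤ C' / ε := by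
        rw [le_div_iff₀ hε]
        calc ((Nf ε : ℝ)) ^ (1 - σ) * ε = ε * ((Nf ε : ℝ)) ^ (1 - σ) := mul_comm _ _
          _ ≤ C' := hb
      calc ((Kf ε).card : ℝ) = ((Nf ε : ℝ)) ^ ((1 - σ) * q) := by
            rw [hexp1, Real.rpow_one, hNfdef]
        _ = (((Nf ε : ℝ)) ^ (1 - σ)) ^ q := Real.rpow_mul (Nat.cast_nonneg _) _ _
        _ ≤ (C' / ε) ^ q := Real.rpow_le_rpow (Real.rpow_nonneg (Nat.cast_nonneg _) _)
            hb2 hqpos.le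
    have hsummable : Summable (fun n => a n ^ t) :=
      summable_rpow_of_count_bound a ha (M + 1) (by linarith) (fun n => by
        have := hM n; simp only [hadef]; linarith)
        t q C' hqpos hqt hC'pos Kf (fun ε hε n hn => (hKmem ε hε n).mpr hn) hcount
    exact hns hsummable
  -- Step B: also force the count to grow
  have Hstep : ∀ (K : ℕ) (C : ℝ), ∃ ε : ℝ, 0 < ε ∧ C < ε * ((Nf ε : ℝ)) ^ (1 - σ)
      ∧ K < Nf ε := by
    intro K C
    obtain ⟨ε, hε, hbig⟩ := Hgrow (max C ((M + 1) * ((K + 1 : ℕ) : ℝ) ^ (1 - σ)))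
    refine ⟨ε, hε, lt_of_le_of_lt (le_max_left _ _) hbig, ?_⟩
    by_contra hle
    push_neg at hle
    have hKK : (0:ℝ) < (M + 1) * ((K + 1 : ℕ) : ℝ) ^ (1 - σ) := by positivity
    -- Nf ε ≥ 1
    have hN1 : 1 ≤ Nf ε := by
      rcases Nat.eq_zero_or_pos (Nf ε) with h0 | h0
      · rw [h0, Nat.cast_zero, Real.zero_rpow (ne_of_gt h1σ), mul_zero] at hbig
        exact absurd hbig (not_lt.mpr (le_trans hKK.le (le_max_right _ _)))
      · exact h0
    -- some element has a n > ε, so ε < M + 1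
    have hεM : ε ≤ M + 1 := by
      have hne : (Kf ε).Nonempty := Finset.card_pos.mp hN1
      obtain ⟨n, hn⟩ := hne
      have := (hKmem ε hε n).mp hn
      have := hM n
      simp only [hadef] at *
      linarith
    have hmono : ((Nf ε : ℝ)) ^ (1 - σ) < (((K + 1 : ℕ) : ℝ)) ^ (1 - σ) := by
      apply Real.rpow_lt_rpow (Nat.cast_nonneg _) _ h1σ
      exact_mod_cast Nat.lt_succ_of_le hle
    have : ε * ((Nf ε : ℝ)) ^ (1 - σ) ≤ (M + 1) * ((K + 1 : ℕ) : ℝ) ^ (1 - σ) := by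
      apply mul_le_mul hεM hmono.le (Real.rpow_nonneg (Nat.cast_nonneg _) _) (by linarith)
    exact absurd hbig (not_lt.mpr (le_trans this (le_max_right _ _)))
  -- Step C: recursive choice of levels
  choose! F hF1 hF2 hF3 using Hstep
  set e : ℕ → ℝ := fun m => Nat.rec (F 0 0) (fun m ih => F (Nf ih) ((m:ℝ) + 1)) m with hedef
  have he_succ : ∀ m, e (m + 1) = F (Nf (e m)) ((m:ℝ) + 1) := fun m => rfl
  have hepos : ∀ m, 0 < e m := by
    intro m
    cases m with
    | zero => exact hF1 0 0
    | succ m => rw [he_succ]; exact hF1 _ _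
  set k : ℕ → ℕ := fun m => Nf (e m) with hkdef
  have hkmono : ∀ m, k m < k (m + 1) := by
    intro m
    show Nf (e m) < Nf (e (m + 1))
    rw [he_succ]
    exact hF3 (Nf (e m)) ((m:ℝ) + 1)
  have hkstrict : StrictMono k := strictMono_nat_of_lt_succ hkmono
  have hbound : ∀ m : ℕ, ((m:ℝ) + 1) < e (m + 1) * ((k (m + 1) : ℝ)) ^ (1 - σ) := by
    intro m
    show ((m:ℝ) + 1) < e (m + 1) * ((Nf (e (m + 1)) : ℝ)) ^ (1 - σ)
    rw [he_succ]
    exact hF2 (Nf (e m)) ((m:ℝ) + 1)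
  have he_dec : ∀ m, e (m + 1) < e m := by
    intro m
    by_contra hge
    push_neg at hge
    have hsub := hKsub (e m) (e (m + 1)) (hepos m) hge
    have : k (m + 1) ≤ k m := Finset.card_le_card hsub
    exact absurd (hkmono m) (not_lt.mpr this)
  have he_anti : StrictAnti e := strictAnti_nat_of_succ_lt he_dec
  set K' : ℕ → Finset ℕ := fun m => Kf (e m) with hK'def
  have hK'mono : Monotone K' := by
    apply monotone_nat_of_le_succ
    intro m
    exact hKsub (e (m + 1)) (e m) (hepos (m + 1)) (he_dec m).le
  have hK'card : ∀ n : ℕ, ∃ m, n < (K' m).card := by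
    intro n
    exact ⟨n + 1, lt_of_lt_of_le (Nat.lt_succ_self n) (hkstrict.le_apply)⟩
  obtain ⟨f, hfinj, hfmem⟩ := exists_inj_aux K' hK'mono hK'card
  have hsum := key_summable x hx M hM0 hM r h1 f hfinj σ hσr
  set T : ℝ := ∑' n, a (f (n + 1)) * ((n + 1 : ℕ) : ℝ) ^ (-σ) with hTdef
  have hTub : ∀ m : ℕ, 1 ≤ m →
      (2:ℝ) ^ (σ - 1) * (2:ℝ) ^ (σ - 1) * ((m:ℝ) + 1) ≤ T := by
    intro m hm
    set km : ℕ := k (m + 1) with hkm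
    have hkm2 : 2 ≤ km := by
      have := hkstrict.le_apply (x := m + 1)
      omega
    have hmem : ∀ n : ℕ, n < km - 1 → e (m + 1) < a (f (n + 1)) := by
      intro n hn
      have hn' : n + 1 < km := by omega
      have := hfmem (m + 1) (n + 1) (by rw [hK'def]; exact hn')
      exact (hKmem (e (m + 1)) (hepos (m + 1)) (f (n + 1))).mp this
    have hpart : ∑ n ∈ Finset.range (km - 1), a (f (n + 1)) * ((n + 1 : ℕ) : ℝ) ^ (-σ) ≤ T :=
      Summable.sum_le_tsum _ (fun n _ => by positivity) hsum
    have hlow : e (m + 1) * ((2:ℝ) ^ (σ - 1) * (((km - 1 : ℕ) : ℝ)) ^ (1 - σ))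
        ≤ ∑ n ∈ Finset.range (km - 1), a (f (n + 1)) * ((n + 1 : ℕ) : ℝ) ^ (-σ) := by
      calc e (m + 1) * ((2:ℝ) ^ (σ - 1) * (((km - 1 : ℕ) : ℝ)) ^ (1 - σ))
          ≤ e (m + 1) * ∑ n ∈ Finset.range (km - 1), ((n + 1 : ℕ) : ℝ) ^ (-σ) :=
            mul_le_mul_of_nonneg_left (sum_rpow_lb σ hσlt1 (km - 1)) (hepos (m + 1)).le
        _ = ∑ n ∈ Finset.range (km - 1), e (m + 1) * ((n + 1 : ℕ) : ℝ) ^ (-σ) := by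
            rw [Finset.mul_sum]
        _ ≤ _ := by
            apply Finset.sum_le_sum
            intro n hn
            exact mul_le_mul_of_nonneg_right (hmem n (Finset.mem_range.mp hn)).le
              (by positivity)
    have hhalf : ((km : ℝ)) / 2 ≤ ((km - 1 : ℕ) : ℝ) := by
      have h3 : km ≤ 2 * (km - 1) := by omega
      have h4 : (km:ℝ) ≤ 2 * ((km - 1 : ℕ):ℝ) := by exact_mod_cast h3
      linarith
    have hstep : (2:ℝ) ^ (σ - 1) * ((km : ℝ)) ^ (1 - σ) ≤ (((km - 1 : ℕ) : ℝ)) ^ (1 - σ) := by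
      have hkm0 : (0:ℝ) < (km : ℝ) := Nat.cast_pos.mpr (by omega)
      calc (2:ℝ) ^ (σ - 1) * ((km : ℝ)) ^ (1 - σ) = (((km : ℝ)) / 2) ^ (1 - σ) := by
            rw [Real.div_rpow hkm0.le (by norm_num),
              show σ - 1 = -(1 - σ) by ring, Real.rpow_neg (by norm_num), inv_mul_eq_div]
        _ ≤ _ := Real.rpow_le_rpow (div_nonneg hkm0.le (by norm_num)) hhalf h1σ.le
    -- combine
    have hcore : ((m:ℝ) + 1) < e (m + 1) * ((km : ℝ)) ^ (1 - σ) := hbound m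
    have hfinal : (2:ℝ) ^ (σ - 1) * (2:ℝ) ^ (σ - 1) * ((m:ℝ) + 1)
        ≤ e (m + 1) * ((2:ℝ) ^ (σ - 1) * (((km - 1 : ℕ) : ℝ)) ^ (1 - σ)) := by
      have hc1 : (0:ℝ) < (2:ℝ) ^ (σ - 1) := by positivity
      calc (2:ℝ) ^ (σ - 1) * (2:ℝ) ^ (σ - 1) * ((m:ℝ) + 1)
          ≤ (2:ℝ) ^ (σ - 1) * (2:ℝ) ^ (σ - 1) * (e (m + 1) * ((km : ℝ)) ^ (1 - σ)) := by
            apply mul_le_mul_of_nonneg_left hcore.le (by positivity)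
        _ = e (m + 1) * ((2:ℝ) ^ (σ - 1) * ((2:ℝ) ^ (σ - 1) * ((km : ℝ)) ^ (1 - σ))) := by
            ring
        _ ≤ e (m + 1) * ((2:ℝ) ^ (σ - 1) * (((km - 1 : ℕ) : ℝ)) ^ (1 - σ)) :=
            mul_le_mul_of_nonneg_left (mul_le_mul_of_nonneg_left hstep hc1.le)
              (hepos (m + 1)).le
    exact le_trans hfinal (le_trans hlow hpart)
  -- contradiction
  have hc1 : (0:ℝ) < (2:ℝ) ^ (σ - 1) * (2:ℝ) ^ (σ - 1) := by positivity
  obtain ⟨m, hm⟩ := exists_nat_gt (T / ((2:ℝ) ^ (σ - 1) * (2:ℝ) ^ (σ - 1)))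
  have hm1 : 1 ≤ m + 1 := by omega
  have := hTub (m + 1) hm1
  rw [div_lt_iff₀ hc1] at hm
  have hmm : ((m:ℝ)) ≤ ((m + 1 : ℕ):ℝ) + 1 := by push_cast; linarith
  nlinarith [this, hm]
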